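/- Let R_mc(t) denote the number of reduced 3×3 magic squares whose maximum entry equals t. Then for every integer t ≥ 1: R_mc(t) = 0 if t is odd; R_mc(t) = 2t−16 if t ≡ 0 (mod 12); R_mc(t) = 2t−4 if t ≡ 2 or 10 (mod 12); R_mc(t) = 2t−8 if t ≡ 4 or 8 (mod 12); and R_mc(t) = 2t−12 if t ≡ 6 (mod 12). -/

import Mathlib

/-- A 3×3 magic square: all nine entries distinct, all row sums, column sums,
the main diagonal sum and the antidiagonal sum equal. -/
def IsMagicSq (x : Matrix (Fin 3) (Fin 3) ℤ) : Prop :=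
  (Function.Injective fun p : Fin 3 × Fin 3 => x p.1 p.2) ∧
  ∃ s : ℤ, (∀ i, ∑ j, x i j = s) ∧ (∀ j, ∑ i, x i j = s) ∧
    x 0 0 + x 1 1 + x 2 2 = s ∧ x 0 2 + x 1 1 + x 2 0 = s

/-- `Rmc t` = number of reduced 3×3 magic squares (nonnegative entries, minimum
entry 0) whose maximum entry equals t. -/
noncomputable def Rmc (t : ℕ) : ℕ :=
  {x : Matrix (Fin 3) (Fin 3) ℤ |
    IsMagicSq x ∧ (∀ i j, 0 ≤ x i j) ∧ (∃ i j, x i j = 0) ∧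
    (∀ i j, x i j ≤ (t : ℤ)) ∧ (∃ i j, x i j = (t : ℤ))}.ncard

def mkSq (c a b : ℤ) : Matrix (Fin 3) (Fin 3) ℤ :=
  !![c+a, c-a-b, c+b; c-a+b, c, c+a-b; c-b, c+a+b, c-a]

def Pset (t : ℕ) : Set (ℤ × ℤ) :=
  {p | p.1 ≠ 0 ∧ p.2 ≠ 0 ∧ p.1 ≠ p.2 ∧ p.1 ≠ -p.2 ∧ p.1 ≠ 2*p.2 ∧ p.1 ≠ -2*p.2 ∧
      p.2 ≠ 2*p.1 ∧ p.2 ≠ -2*p.1 ∧ 2*(p.1.natAbs + p.2.natAbs) = t}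

noncomputable def fsq (p : ℤ × ℤ) : Matrix (Fin 3) (Fin 3) ℤ :=
  mkSq ((p.1.natAbs + p.2.natAbs : ℕ) : ℤ) p.1 p.2

lemma magic_form (x : Matrix (Fin 3) (Fin 3) ℤ) (h : IsMagicSq x) :
    x = mkSq (x 1 1) (x 0 0 - x 1 1) (x 0 2 - x 1 1) := by
  obtain ⟨_, s, hr, hc, hd1, hd2⟩ := h
  have hr0 := hr 0; have hr1 := hr 1; have hr2 := hr 2
  have hc0 := hc 0; have hc1 := hc 1; have hc2 := hc 2
  simp [Fin.sum_univ_three] at hr0 hr1 hr2 hc0 hc1 hc2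
  ext i j
  fin_cases i <;> fin_cases j <;> simp [mkSq] <;> omega

set_option maxHeartbeats 1000000 in
lemma mkSq_inj {c a b : ℤ} (h1 : a ≠ 0) (h2 : b ≠ 0) (h3 : a ≠ b) (h4 : a ≠ -b)
    (h5 : a ≠ 2*b) (h6 : a ≠ -2*b) (h7 : b ≠ 2*a) (h8 : b ≠ -2*a) :
    Function.Injective fun p : Fin 3 × Fin 3 => mkSq c a b p.1 p.2 := by
  rintro ⟨p1, p2⟩ ⟨q1, q2⟩ h
  simp only at h
  fin_cases p1 <;> fin_cases p2 <;> fin_cases q1 <;> fin_cases q2 <;>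
    first | rfl | (exfalso; simp [mkSq] at h; omega)

lemma mkSq_magic {c a b : ℤ} (h1 : a ≠ 0) (h2 : b ≠ 0) (h3 : a ≠ b) (h4 : a ≠ -b)
    (h5 : a ≠ 2*b) (h6 : a ≠ -2*b) (h7 : b ≠ 2*a) (h8 : b ≠ -2*a) :
    IsMagicSq (mkSq c a b) := by
  refine ⟨mkSq_inj h1 h2 h3 h4 h5 h6 h7 h8, 3*c, ?_, ?_, ?_, ?_⟩
  · intro i; fin_cases i <;> simp [mkSq, Fin.sum_univ_three] <;> ring
  · intro j; fin_cases j <;> simp [mkSq, Fin.sum_univ_three] <;> ring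
  · simp [mkSq]; ring
  · simp [mkSq]; ring

lemma mkSq_zero_le {c a b : ℤ} {i j : Fin 3} (h : mkSq c a b i j = 0) :
    c ≤ (a.natAbs : ℤ) + b.natAbs := by
  fin_cases i <;> fin_cases j <;> simp [mkSq] at h <;> omega

lemma mkSq_t_le {c a b u : ℤ} {i j : Fin 3} (h : mkSq c a b i j = u) :
    u ≤ c + (a.natAbs : ℤ) + b.natAbs := by
  fin_cases i <;> fin_cases j <;> simp [mkSq] at h <;> omega

lemma mkSq_nonneg {a b c : ℤ} (hc : c = (a.natAbs : ℤ) + b.natAbs) (i j : Fin 3) :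
    0 ≤ mkSq c a b i j := by
  fin_cases i <;> fin_cases j <;> simp [mkSq] <;> omega

lemma mkSq_le {a b c : ℤ} (hc : c = (a.natAbs : ℤ) + b.natAbs) (i j : Fin 3) :
    mkSq c a b i j ≤ 2 * c := by
  fin_cases i <;> fin_cases j <;> simp [mkSq] <;> omega

set_option maxHeartbeats 1000000 in
lemma set_eq (t : ℕ) :
    {x : Matrix (Fin 3) (Fin 3) ℤ |
      IsMagicSq x ∧ (∀ i j, 0 ≤ x i j) ∧ (∃ i j, x i j = 0) ∧
      (∀ i j, x i j ≤ (t : ℤ)) ∧ (∃ i j, x i j = (t : ℤ))} = fsq '' Pset t := by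
  ext x
  simp only [Set.mem_setOf_eq, Set.mem_image]
  constructor
  · rintro ⟨hm, hpos, ⟨i0, j0, hz⟩, hle, ⟨i1, j1, htw⟩⟩
    set c := x 1 1 with hcd
    set a := x 0 0 - c with had
    set b := x 0 2 - c with hbd
    have hx : x = mkSq c a b := magic_form x hm
    have key : ∀ p q : Fin 3 × Fin 3, x p.1 p.2 = x q.1 q.2 → p = q := fun p q h => hm.1 h
    have e00 : x 0 0 = c + a := by omega
    have e02 : x 0 2 = c + b := by omega
    have e01 : x 0 1 = c - a - b := by simpa [mkSq] using congrFun (congrFun hx 0) 1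
    have e10 : x 1 0 = c - a + b := by simpa [mkSq] using congrFun (congrFun hx 1) 0
    have e12 : x 1 2 = c + a - b := by simpa [mkSq] using congrFun (congrFun hx 1) 2
    have e20 : x 2 0 = c - b := by simpa [mkSq] using congrFun (congrFun hx 2) 0
    have e21 : x 2 1 = c + a + b := by simpa [mkSq] using congrFun (congrFun hx 2) 1
    have e22 : x 2 2 = c - a := by simpa [mkSq] using congrFun (congrFun hx 2) 2
    have h1 : a ≠ 0 := fun h =>
      absurd (key (0,0) (1,1) (by simp only [Prod.fst, Prod.snd]; omega)) (by decide)
    have h2 : b ≠ 0 := fun h =>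
      absurd (key (0,2) (1,1) (by simp only [Prod.fst, Prod.snd]; omega)) (by decide)
    have h3 : a ≠ b := fun h =>
      absurd (key (0,0) (0,2) (by simp only [Prod.fst, Prod.snd]; omega)) (by decide)
    have h4 : a ≠ -b := fun h =>
      absurd (key (0,0) (2,0) (by simp only [Prod.fst, Prod.snd]; omega)) (by decide)
    have h5 : a ≠ 2*b := fun h =>
      absurd (key (1,2) (0,2) (by simp only [Prod.fst, Prod.snd]; omega)) (by decide)
    have h6 : a ≠ -2*b := fun h =>
      absurd (key (2,1) (2,0) (by simp only [Prod.fst, Prod.snd]; omega)) (by decide)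
    have h7 : b ≠ 2*a := fun h =>
      absurd (key (1,0) (0,0) (by simp only [Prod.fst, Prod.snd]; omega)) (by decide)
    have h8 : b ≠ -2*a := fun h =>
      absurd (key (2,1) (2,2) (by simp only [Prod.fst, Prod.snd]; omega)) (by decide)
    have n01 : 0 ≤ c - a - b := e01 ▸ hpos 0 1
    have n21 : 0 ≤ c + a + b := e21 ▸ hpos 2 1
    have n10 : 0 ≤ c - a + b := e10 ▸ hpos 1 0
    have n12 : 0 ≤ c + a - b := e12 ▸ hpos 1 2
    have hub : c ≤ (a.natAbs : ℤ) + b.natAbs := mkSq_zero_le (hx ▸ hz)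
    have htub : (t : ℤ) ≤ c + (a.natAbs : ℤ) + b.natAbs := mkSq_t_le (hx ▸ htw)
    have l21 : c + a + b ≤ t := e21 ▸ hle 2 1
    have l01 : c - a - b ≤ t := e01 ▸ hle 0 1
    have l10 : c - a + b ≤ t := e10 ▸ hle 1 0
    have l12 : c + a - b ≤ t := e12 ▸ hle 1 2
    have hcabs : c = ((a.natAbs + b.natAbs : ℕ) : ℤ) := by omega
    have hts : (t : ℤ) = 2 * c := by omega
    refine ⟨(a, b), ⟨h1, h2, h3, h4, h5, h6, h7, h8, by omega⟩, ?_⟩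
    rw [fsq]; simp only
    rw [← hcabs, ← hx]
  · rintro ⟨⟨a, b⟩, ⟨h1, h2, h3, h4, h5, h6, h7, h8, hsum⟩, rfl⟩
    simp only [fsq]
    obtain ⟨c, hc⟩ : ∃ c : ℤ, ((a.natAbs + b.natAbs : ℕ) : ℤ) = c := ⟨_, rfl⟩
    rw [hc]
    have hc' : c = (a.natAbs : ℤ) + b.natAbs := by omega
    refine ⟨mkSq_magic h1 h2 h3 h4 h5 h6 h7 h8, mkSq_nonneg hc', ?_,
      fun i j => by have := mkSq_le hc' i j; omega, ?_⟩
    · rcases le_or_gt 0 a with ha | ha <;> rcases le_or_gt 0 b with hb | hb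
      · exact ⟨0, 1, by simp [mkSq]; omega⟩
      · exact ⟨1, 0, by simp [mkSq]; omega⟩
      · exact ⟨1, 2, by simp [mkSq]; omega⟩
      · exact ⟨2, 1, by simp [mkSq]; omega⟩
    · rcases le_or_gt 0 a with ha | ha <;> rcases le_or_gt 0 b with hb | hb
      · exact ⟨2, 1, by simp [mkSq]; omega⟩
      · exact ⟨1, 2, by simp [mkSq]; omega⟩
      · exact ⟨1, 0, by simp [mkSq]; omega⟩
      · exact ⟨0, 1, by simp [mkSq]; omega⟩

noncomputable def Aset (c : ℕ) : Finset ℤ :=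
  (Finset.Icc 1 ((c:ℤ)-1)).filter fun a => 2*a ≠ (c:ℤ) ∧ 3*a ≠ (c:ℤ) ∧ 3*a ≠ 2*(c:ℤ)

noncomputable def PF (c : ℕ) : Finset (ℤ × ℤ) :=
  ((({-1,1} : Finset ℤ) ×ˢ ({-1,1} : Finset ℤ)) ×ˢ Aset c).image
    fun q => (q.1.1 * q.2, q.1.2 * ((c:ℤ) - q.2))

lemma Pset_eq (c : ℕ) : Pset (2*c) = ↑(PF c) := by
  ext ⟨x, y⟩
  simp only [Pset, Set.mem_setOf_eq, PF, Finset.coe_image, Set.mem_image, Finset.mem_coe,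
    Finset.mem_product, Finset.mem_insert, Finset.mem_singleton, Aset, Finset.mem_filter,
    Finset.mem_Icc, Prod.exists, Prod.mk.injEq]
  constructor
  · rintro ⟨h1, h2, h3, h4, h5, h6, h7, h8, h9⟩
    rcases le_or_gt x 0 with hx | hx <;> rcases le_or_gt y 0 with hy | hy
    · exact ⟨-1, -1, -x, ⟨⟨by norm_num, by norm_num⟩, ⟨by omega, by omega⟩, by omega, by omega,
        by omega⟩, by omega, by omega⟩
    · exact ⟨-1, 1, -x, ⟨⟨by norm_num, by norm_num⟩, ⟨by omega, by omega⟩, by omega, by omega,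
        by omega⟩, by omega, by omega⟩
    · exact ⟨1, -1, x, ⟨⟨by norm_num, by norm_num⟩, ⟨by omega, by omega⟩, by omega, by omega,
        by omega⟩, by omega, by omega⟩
    · exact ⟨1, 1, x, ⟨⟨by norm_num, by norm_num⟩, ⟨by omega, by omega⟩, by omega, by omega,
        by omega⟩, by omega, by omega⟩
  · rintro ⟨s1, s2, a, ⟨⟨hs1, hs2⟩, ⟨ha1, ha2⟩, hb1, hb2, hb3⟩, hx, hy⟩
    rcases hs1 with rfl | rfl <;> rcases hs2 with rfl | rfl <;> subst hx <;> subst hy <;>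
      refine ⟨by omega, by omega, by omega, by omega, by omega, by omega, by omega, by omega,
        by omega⟩

lemma PF_card (c : ℕ) : (PF c).card = 4 * (Aset c).card := by
  have hinj : Set.InjOn (fun q : (ℤ × ℤ) × ℤ => (q.1.1 * q.2, q.1.2 * ((c:ℤ) - q.2)))
      ↑((({-1,1} : Finset ℤ) ×ˢ ({-1,1} : Finset ℤ)) ×ˢ Aset c) := by
    rintro ⟨⟨s1, s2⟩, a⟩ hm ⟨⟨s1', s2'⟩, a'⟩ hm' heq
    simp only [Finset.coe_product, Set.mem_prod, Finset.mem_coe, Finset.mem_insert,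
      Finset.mem_singleton, Aset, Finset.mem_filter, Finset.mem_Icc, Prod.mk.injEq] at hm hm' heq
    obtain ⟨⟨hs1, hs2⟩, ⟨ha1, _⟩, _⟩ := hm
    obtain ⟨⟨hs1', hs2'⟩, ⟨ha1', _⟩, _⟩ := hm'
    obtain ⟨he1, he2⟩ := heq
    have h : a = a' ∧ s1 = s1' ∧ s2 = s2' := by
      rcases hs1 with rfl | rfl <;> rcases hs2 with rfl | rfl <;>
        rcases hs1' with rfl | rfl <;> rcases hs2' with rfl | rfl <;>
        refine ⟨by omega, by omega, by omega⟩
    simp [Prod.ext_iff, h.1, h.2.1, h.2.2]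
  rw [PF, Finset.card_image_of_injOn hinj, Finset.card_product, Finset.card_product,
    show ({-1,1} : Finset ℤ).card = 2 from rfl]

lemma Aset_card_11 (c : ℕ) (h2 : c % 2 ≠ 0) (h3 : c % 3 ≠ 0) :
    ((Aset c).card : ℤ) = (c : ℤ) - 1 := by
  have key := Finset.card_filter_add_card_filter_not
    (s := Finset.Icc 1 ((c:ℤ)-1))
    (p := fun a => 2*a ≠ (c:ℤ) ∧ 3*a ≠ (c:ℤ) ∧ 3*a ≠ 2*(c:ℤ))
  have hB : (Finset.Icc 1 ((c:ℤ)-1)).filter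
      (fun a => ¬(2*a ≠ (c:ℤ) ∧ 3*a ≠ (c:ℤ) ∧ 3*a ≠ 2*(c:ℤ))) = ∅ := by
    ext a
    simp only [Finset.mem_filter, Finset.mem_Icc, Finset.notMem_empty, iff_false,
      not_and_or, not_not, ne_eq, not_and, not_or]
    omega
  rw [hB, Finset.card_empty] at key
  rw [show ((Finset.Icc 1 ((c:ℤ)-1)).filter
      (fun a => 2*a ≠ (c:ℤ) ∧ 3*a ≠ (c:ℤ) ∧ 3*a ≠ 2*(c:ℤ))) = Aset c from rfl] at key
  have hI := Int.card_Icc (1 : ℤ) ((c:ℤ)-1)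
  omega

lemma Aset_card_21 (c : ℕ) (h2 : c % 2 = 0) (h3 : c % 3 ≠ 0) (hc : 1 ≤ c) :
    ((Aset c).card : ℤ) = (c : ℤ) - 2 := by
  have key := Finset.card_filter_add_card_filter_not
    (s := Finset.Icc 1 ((c:ℤ)-1))
    (p := fun a => 2*a ≠ (c:ℤ) ∧ 3*a ≠ (c:ℤ) ∧ 3*a ≠ 2*(c:ℤ))
  have hB : (Finset.Icc 1 ((c:ℤ)-1)).filter
      (fun a => ¬(2*a ≠ (c:ℤ) ∧ 3*a ≠ (c:ℤ) ∧ 3*a ≠ 2*(c:ℤ))) = {(c:ℤ)/2} := by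
    ext a
    simp only [Finset.mem_filter, Finset.mem_Icc, Finset.mem_singleton,
      not_and_or, not_not, ne_eq]
    omega
  rw [hB, Finset.card_singleton] at key
  rw [show ((Finset.Icc 1 ((c:ℤ)-1)).filter
      (fun a => 2*a ≠ (c:ℤ) ∧ 3*a ≠ (c:ℤ) ∧ 3*a ≠ 2*(c:ℤ))) = Aset c from rfl] at key
  have hI := Int.card_Icc (1 : ℤ) ((c:ℤ)-1)
  omega

lemma Aset_card_13 (c : ℕ) (h2 : c % 2 ≠ 0) (h3 : c % 3 = 0) (hc : 1 ≤ c) :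
    ((Aset c).card : ℤ) = (c : ℤ) - 3 := by
  have key := Finset.card_filter_add_card_filter_not
    (s := Finset.Icc 1 ((c:ℤ)-1))
    (p := fun a => 2*a ≠ (c:ℤ) ∧ 3*a ≠ (c:ℤ) ∧ 3*a ≠ 2*(c:ℤ))
  have hB : (Finset.Icc 1 ((c:ℤ)-1)).filter
      (fun a => ¬(2*a ≠ (c:ℤ) ∧ 3*a ≠ (c:ℤ) ∧ 3*a ≠ 2*(c:ℤ)))
      = {(c:ℤ)/3, 2*((c:ℤ)/3)} := by
    ext a
    simp only [Finset.mem_filter, Finset.mem_Icc, Finset.mem_insert, Finset.mem_singleton,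
      not_and_or, not_not, ne_eq]
    omega
  rw [hB, Finset.card_insert_of_notMem (by simp only [Finset.mem_singleton]; omega),
    Finset.card_singleton] at key
  rw [show ((Finset.Icc 1 ((c:ℤ)-1)).filter
      (fun a => 2*a ≠ (c:ℤ) ∧ 3*a ≠ (c:ℤ) ∧ 3*a ≠ 2*(c:ℤ))) = Aset c from rfl] at key
  have hI := Int.card_Icc (1 : ℤ) ((c:ℤ)-1)
  omega

lemma Aset_card_23 (c : ℕ) (h2 : c % 2 = 0) (h3 : c % 3 = 0) (hc : 1 ≤ c) :
    ((Aset c).card : ℤ) = (c : ℤ) - 4 := by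
  have key := Finset.card_filter_add_card_filter_not
    (s := Finset.Icc 1 ((c:ℤ)-1))
    (p := fun a => 2*a ≠ (c:ℤ) ∧ 3*a ≠ (c:ℤ) ∧ 3*a ≠ 2*(c:ℤ))
  have hB : (Finset.Icc 1 ((c:ℤ)-1)).filter
      (fun a => ¬(2*a ≠ (c:ℤ) ∧ 3*a ≠ (c:ℤ) ∧ 3*a ≠ 2*(c:ℤ)))
      = {(c:ℤ)/2, (c:ℤ)/3, 2*((c:ℤ)/3)} := by
    ext a
    simp only [Finset.mem_filter, Finset.mem_Icc, Finset.mem_insert, Finset.mem_singleton,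
      not_and_or, not_not, ne_eq]
    omega
  rw [hB,
    Finset.card_insert_of_notMem (by simp only [Finset.mem_insert, Finset.mem_singleton]; omega),
    Finset.card_insert_of_notMem (by simp only [Finset.mem_singleton]; omega),
    Finset.card_singleton] at key
  rw [show ((Finset.Icc 1 ((c:ℤ)-1)).filter
      (fun a => 2*a ≠ (c:ℤ) ∧ 3*a ≠ (c:ℤ) ∧ 3*a ≠ 2*(c:ℤ))) = Aset c from rfl] at key
  have hI := Int.card_Icc (1 : ℤ) ((c:ℤ)-1)
  omega

lemma fsq_inj : Function.Injective fsq := by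
  rintro ⟨a, b⟩ ⟨a', b'⟩ h
  have h11 : ((a.natAbs + b.natAbs : ℕ) : ℤ) = ((a'.natAbs + b'.natAbs : ℕ) : ℤ) :=
    congrFun (congrFun h 1) 1
  have h00 : ((a.natAbs + b.natAbs : ℕ) : ℤ) + a = ((a'.natAbs + b'.natAbs : ℕ) : ℤ) + a' :=
    congrFun (congrFun h 0) 0
  have h02 : ((a.natAbs + b.natAbs : ℕ) : ℤ) + b = ((a'.natAbs + b'.natAbs : ℕ) : ℤ) + b' :=
    congrFun (congrFun h 0) 2
  exact Prod.ext_iff.mpr ⟨by omega, by omega⟩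

lemma rmc_eq (t : ℕ) : Rmc t = (Pset t).ncard := by
  rw [Rmc, set_eq t, Set.ncard_image_of_injective _ fsq_inj]

theorem reduced_magic_cubic_count (t : ℕ) (ht : 1 ≤ t) :
    (Odd t → Rmc t = 0) ∧
    (t % 12 = 0 → (Rmc t : ℤ) = 2 * (t : ℤ) - 16) ∧
    ((t % 12 = 2 ∨ t % 12 = 10) → (Rmc t : ℤ) = 2 * (t : ℤ) - 4) ∧
    ((t % 12 = 4 ∨ t % 12 = 8) → (Rmc t : ℤ) = 2 * (t : ℤ) - 8) ∧
    (t % 12 = 6 → (Rmc t : ℤ) = 2 * (t : ℤ) - 12) := by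
  refine ⟨?_, ?_, ?_, ?_, ?_⟩
  · intro hodd
    obtain ⟨k, hk⟩ := hodd
    have he : Pset t = ∅ := by
      rw [Set.eq_empty_iff_forall_notMem]
      rintro ⟨x, y⟩ ⟨_, _, _, _, _, _, _, _, h9⟩
      omega
    rw [rmc_eq, he, Set.ncard_empty]
  · intro h
    obtain ⟨c, rfl⟩ : ∃ c, t = 2*c := ⟨t/2, by omega⟩
    rw [rmc_eq, Pset_eq, Set.ncard_coe_finset, PF_card]
    have hA := Aset_card_23 c (by omega) (by omega) (by omega)
    push_cast
    omega
  · intro h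
    obtain ⟨c, rfl⟩ : ∃ c, t = 2*c := ⟨t/2, by omega⟩
    rw [rmc_eq, Pset_eq, Set.ncard_coe_finset, PF_card]
    have hA := Aset_card_11 c (by omega) (by omega)
    push_cast
    omega
  · intro h
    obtain ⟨c, rfl⟩ : ∃ c, t = 2*c := ⟨t/2, by omega⟩
    rw [rmc_eq, Pset_eq, Set.ncard_coe_finset, PF_card]
    have hA := Aset_card_21 c (by omega) (by omega) (by omega)
    push_cast
    omega
  · intro h
    obtain ⟨c, rfl⟩ : ∃ c, t = 2*c := ⟨t/2, by omega⟩
    rw [rmc_eq, Pset_eq, Set.ncard_coe_finset, PF_card]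
    have hA := Aset_card_13 c (by omega) (by omega) (by omega)
    push_cast
    omega
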